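/- Let A have Spark(A) = L+1 with k ≤ L, and suppose γ(ℓ_0, A, k) < 1. Then there exists p > 0 such that γ(ℓ_p, A, k) < 1. -/

import Mathlib

open Finset MeasureTheory Filter

/-- `phi p x = |x|^p`, with the convention `|x|^0 = 1` for `x ≠ 0` and `phi p 0 = 0`. -/
noncomputable def phi (p x : ℝ) : ℝ := if x = 0 then 0 else |x| ^ p

open Classical in
/-- support of a vector, as a finset -/
noncomputable def supp {n : ℕ} (z : Fin n → ℝ) : Finset (Fin n) :=
  Finset.univ.filter (fun i => z i ≠ 0)

/-- `Spark(A) = s`: some `s` columns are linearly dependent (a kernel vector with support of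
size `s`), and every nonzero kernel vector has support of size at least `s`. -/
def sparkEq {m n : ℕ} (A : Matrix (Fin m) (Fin n) ℝ) (s : ℕ) : Prop :=
  (∃ z, A.mulVec z = 0 ∧ z ≠ 0 ∧ (supp z).card = s) ∧
  (∀ z, A.mulVec z = 0 → z ≠ 0 → s ≤ (supp z).card)

/-- The set of constants `γ` satisfying the null space property inequality at level `k`. -/
def validNSC {m n : ℕ} (A : Matrix (Fin m) (Fin n) ℝ) (p : ℝ) (k : ℕ) : Set ℝ :=
  {γ | ∀ S : Finset (Fin n), S.card ≤ k → ∀ z, A.mulVec z = 0 →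
    ∑ i ∈ S, phi p (z i) ≤ γ * ∑ i ∈ Sᶜ, phi p (z i)}

/-- The null space constant `γ(ℓ_p, A, k)`: the smallest valid constant. -/
noncomputable def gammaNSC {m n : ℕ} (A : Matrix (Fin m) (Fin n) ℝ) (p : ℝ) (k : ℕ) : ℝ :=
  sInf (validNSC A p k)

/-- The ratio `θ(p, z, S)`. -/
noncomputable def theta {n : ℕ} (p : ℝ) (z : Fin n → ℝ) (S : Finset (Fin n)) : ℝ :=
  (∑ i ∈ S, phi p (z i)) / (∑ i ∈ Sᶜ, phi p (z i))

lemma phi_nonneg (p x : ℝ) : 0 ≤ phi p x := by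
  unfold phi
  split
  · exact le_rfl
  · exact Real.rpow_nonneg (abs_nonneg x) p

lemma gammaNSC_lt_one {m n : ℕ} (A : Matrix (Fin m) (Fin n) ℝ) (p : ℝ) (k : ℕ)
    {γ : ℝ} (h1 : γ ∈ validNSC A p k) (h2 : γ < 1) : gammaNSC A p k < 1 := by
  by_cases hb : BddBelow (validNSC A p k)
  · exact lt_of_le_of_lt (csInf_le hb h1) h2
  · unfold gammaNSC
    rw [Real.sInf_of_not_bddBelow hb]
    norm_num

set_option maxHeartbeats 1000000 in
/-- if γ(ℓ_0,A,k) < 1 then γ(ℓ_p,A,k) < 1 for some p > 0. -/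
theorem stmt9 {M N L : ℕ} (A : Matrix (Fin M) (Fin N) ℝ) (hspark : sparkEq A (L + 1))
    (k : ℕ) (hk : k ≤ L) (h : gammaNSC A 0 k < 1) :
    ∃ p : ℝ, 0 < p ∧ p ≤ 1 ∧ gammaNSC A p k < 1 := by
  classical
  obtain ⟨⟨z₀, hz₀A, hz₀ne, hz₀card⟩, hmin⟩ := hspark
  -- Step 1 : 2k ≤ L
  have h2k : 2 * k ≤ L := by
    rcases Nat.eq_zero_or_pos k with hk0 | hk1
    · omega
    have hne : ((k : ℝ)) ∈ validNSC A 0 k := by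
      intro S hS z hz
      by_cases hz0 : z = 0
      · subst hz0; simp [phi]
      · have hsupp : L + 1 ≤ (supp z).card := hmin z hz hz0
        have hnsub : ¬ (supp z ⊆ S) := by
          intro hsub
          have := Finset.card_le_card hsub
          omega
        obtain ⟨i, hiz, hiS⟩ := Finset.not_subset.mp hnsub
        have hzi : z i ≠ 0 := by simpa [supp] using hiz
        have h1 : (1 : ℝ) ≤ ∑ j ∈ Sᶜ, phi 0 (z j) := by
          have := Finset.single_le_sum (f := fun j => phi 0 (z j))
            (fun j _ => phi_nonneg 0 (z j)) (Finset.mem_compl.mpr hiS)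
          simpa [phi, hzi] using this
        have h2 : ∑ j ∈ S, phi 0 (z j) ≤ (S.card : ℝ) := by
          calc ∑ j ∈ S, phi 0 (z j) ≤ ∑ _j ∈ S, (1:ℝ) := by
                refine Finset.sum_le_sum fun j _ => ?_
                unfold phi
                split
                · norm_num
                · simp
            _ = (S.card : ℝ) := by simp
        calc ∑ j ∈ S, phi 0 (z j) ≤ (S.card : ℝ) := h2
          _ ≤ (k : ℝ) := by exact_mod_cast hS
          _ = (k : ℝ) * 1 := by ring
          _ ≤ (k : ℝ) * ∑ j ∈ Sᶜ, phi 0 (z j) := by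
              exact mul_le_mul_of_nonneg_left h1 (by positivity)
    have hbdd : BddBelow (validNSC A 0 k) := by
      refine ⟨0, fun γ hγ => ?_⟩
      have hion : (supp z₀).Nonempty := by
        rw [← Finset.card_pos, hz₀card]; omega
      obtain ⟨i₀, hi₀⟩ := hion
      have hzi₀ : z₀ i₀ ≠ 0 := by simpa [supp] using hi₀
      have hap := hγ {i₀} (by simp; omega) z₀ hz₀A
      have hLHS : ∑ i ∈ ({i₀} : Finset (Fin N)), phi 0 (z₀ i) = 1 := by
        simp [phi, hzi₀]
      have hRHS : 0 ≤ ∑ i ∈ ({i₀}ᶜ : Finset (Fin N)), phi 0 (z₀ i) :=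
        Finset.sum_nonneg fun j _ => phi_nonneg 0 (z₀ j)
      rw [hLHS] at hap
      nlinarith
    obtain ⟨γ, hγmem, hγlt⟩ := (csInf_lt_iff hbdd ⟨_, hne⟩).mp h
    obtain ⟨S, hSsub, hScard⟩ :=
      Finset.exists_subset_card_eq (show k ≤ (supp z₀).card by omega)
    have hineq := hγmem S (le_of_eq hScard) z₀ hz₀A
    have hLHS : ∑ i ∈ S, phi 0 (z₀ i) = (k : ℝ) := by
      have : ∀ i ∈ S, phi 0 (z₀ i) = 1 := by
        intro i hi
        have hz : z₀ i ≠ 0 := by have := hSsub hi; simpa [supp] using this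
        simp [phi, hz]
      rw [Finset.sum_congr rfl this, Finset.sum_const, hScard]
      simp
    have hfilter : Sᶜ.filter (fun i => z₀ i ≠ 0) = supp z₀ \ S := by
      ext i
      simp only [Finset.mem_filter, Finset.mem_compl, Finset.mem_sdiff, supp,
        Finset.mem_univ, true_and]
      tauto
    have hRHS : ∑ i ∈ Sᶜ, phi 0 (z₀ i) = (((supp z₀ \ S).card : ℕ) : ℝ) := by
      have hcong : ∀ i ∈ Sᶜ, phi 0 (z₀ i) = if z₀ i ≠ 0 then (1:ℝ) else 0 := by
        intro i _
        by_cases hc : z₀ i = 0 <;> simp [phi, hc]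
      rw [Finset.sum_congr rfl hcong, Finset.sum_boole, hfilter]
    have hcard2 : (supp z₀ \ S).card = L + 1 - k := by
      rw [Finset.card_sdiff_of_subset hSsub, hz₀card, hScard]
    have htpos : (0:ℝ) < (((supp z₀ \ S).card : ℕ) : ℝ) := by
      rw [hcard2]
      exact_mod_cast (by omega : 0 < L + 1 - k)
    have hklt : (k:ℝ) < (((supp z₀ \ S).card : ℕ) : ℝ) := by
      rw [hLHS, hRHS] at hineq
      nlinarith
    have : k < (supp z₀ \ S).card := by exact_mod_cast hklt
    omega
  -- Step 2 : compactness, uniform lower bound on the (2k+1) largest coordinates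
  set K : Set (Fin N → ℝ) := {z | A.mulVec z = 0 ∧ ‖z‖ = 1} with hKdef
  have hmvcont : Continuous fun z : Fin N → ℝ => A.mulVec z := by
    have h1 := (Matrix.mulVecLin A).continuous_of_finiteDimensional
    have h2 : (fun z : Fin N → ℝ => A.mulVec z) = ⇑(Matrix.mulVecLin A) := by
      funext z
      simp [Matrix.mulVecLin_apply]
    rw [h2]
    exact h1
  have hKclosed : IsClosed K :=
    (isClosed_eq hmvcont continuous_const).inter
      (isClosed_eq continuous_norm continuous_const)
  have hKsub : K ⊆ Metric.closedBall 0 1 := by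
    rintro z ⟨_, hz2⟩
    simp [Metric.mem_closedBall, dist_zero_right, hz2]
  have hKcompact : IsCompact K :=
    (isCompact_closedBall (0 : Fin N → ℝ) 1).of_isClosed_subset hKclosed hKsub
  set U : ℕ → Set (Fin N → ℝ) := fun n =>
    {z | ∃ W : Finset (Fin N), W.card = 2*k+1 ∧ ∀ i ∈ W, (1:ℝ)/(n+1) < |z i|} with hUdef
  have hUopen : ∀ n, IsOpen (U n) := by
    intro n
    have hrw : U n = ⋃ W ∈ {W : Finset (Fin N) | W.card = 2*k+1},
        ⋂ i ∈ (W : Finset (Fin N)), {z : Fin N → ℝ | (1:ℝ)/(n+1) < |z i|} := by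
      ext z
      simp [hUdef, Set.mem_iUnion, Set.mem_iInter]
    rw [hrw]
    refine isOpen_biUnion fun W _ => isOpen_biInter_finset fun i _ => ?_
    exact isOpen_lt continuous_const ((continuous_apply i).abs)
  have hUmono : ∀ a b : ℕ, a ≤ b → U a ⊆ U b := by
    intro a b hab z hz
    obtain ⟨W, hWc, hW⟩ := hz
    refine ⟨W, hWc, fun i hi => lt_of_le_of_lt ?_ (hW i hi)⟩
    apply one_div_le_one_div_of_le
    · positivity
    · have : (a:ℝ) ≤ (b:ℝ) := by exact_mod_cast hab
      linarith
  have hcover : K ⊆ ⋃ n, U n := by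
    rintro z ⟨hz1, hz2⟩
    have hzne : z ≠ 0 := by
      intro h0
      rw [h0, norm_zero] at hz2
      norm_num at hz2
    have hcard : 2*k+1 ≤ (supp z).card := le_trans (by omega) (hmin z hz1 hzne)
    obtain ⟨W, hWsub, hWcard⟩ := Finset.exists_subset_card_eq hcard
    have hWne : W.Nonempty := by
      rw [← Finset.card_pos, hWcard]; omega
    have hδ : 0 < W.inf' hWne (fun i => |z i|) := by
      rw [Finset.lt_inf'_iff]
      intro i hi
      have hzi : z i ≠ 0 := by have := hWsub hi; simpa [supp] using this
      exact abs_pos.mpr hzi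
    obtain ⟨n, hn⟩ := exists_nat_one_div_lt hδ
    exact Set.mem_iUnion.mpr ⟨n, W, hWcard,
      fun i hi => lt_of_lt_of_le hn (Finset.inf'_le _ hi)⟩
  obtain ⟨t, htt⟩ := hKcompact.elim_finite_subcover U hUopen hcover
  set n₀ : ℕ := t.sup id with hn₀def
  have hKU : ∀ z ∈ K, ∃ W : Finset (Fin N),
      W.card = 2*k+1 ∧ ∀ i ∈ W, (1:ℝ)/(n₀+1) < |z i| := by
    intro z hz
    obtain ⟨n, hnt, hzn⟩ := Set.mem_iUnion₂.mp (htt hz)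
    exact hUmono n n₀ (Finset.le_sup (f := id) hnt) hzn
  -- Step 3 : choose ε, c, p, γ'
  set ε : ℝ := min ((1:ℝ)/(n₀+1)) (1/2) with hεdef
  have hε0 : 0 < ε := lt_min (by positivity) (by norm_num)
  have hεhalf : ε ≤ 1/2 := min_le_right _ _
  set c : ℝ := (2*(k:ℝ)+2)/(2*(k:ℝ)+3) with hcdef
  have hc0 : 0 < c := by positivity
  have hc1 : c < 1 := by
    rw [hcdef, div_lt_one (by positivity)]
    linarith
  have hεc : ε < c := by
    refine lt_of_le_of_lt hεhalf ?_
    rw [hcdef, lt_div_iff₀ (by positivity)]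
    have : (0:ℝ) ≤ (k:ℝ) := Nat.cast_nonneg k
    nlinarith
  have hlogε : Real.log ε < 0 := Real.log_neg hε0 (by linarith)
  have hlogc : Real.log c < 0 := Real.log_neg hc0 hc1
  have hlogεc : Real.log ε < Real.log c := Real.log_lt_log hε0 hεc
  set p : ℝ := Real.log c / Real.log ε with hpdef
  have hp0 : 0 < p := div_pos_of_neg_of_neg hlogc hlogε
  have hpε : p * Real.log ε = Real.log c := div_mul_cancel₀ _ (ne_of_lt hlogε)
  have hp1 : p ≤ 1 := by nlinarith
  have hεp : ε ^ p = c := by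
    rw [Real.rpow_def_of_pos hε0, mul_comm, hpε, Real.exp_log hc0]
  set γ' : ℝ := (2*(k:ℝ)+1)/(2*(k:ℝ)+2) with hγdef
  have hγ0 : 0 ≤ γ' := by positivity
  have hγ1 : γ' < 1 := by
    rw [hγdef, div_lt_one (by positivity)]
    linarith
  have hkey : (k:ℝ) ≤ γ' * (((k:ℝ)+1) * c) := by
    have heq : γ' * (((k:ℝ)+1) * c) = ((2*(k:ℝ)+1)*((k:ℝ)+1)) / (2*(k:ℝ)+3) := by
      rw [hγdef, hcdef]
      field_simp
    rw [heq, le_div_iff₀ (by positivity)]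
    nlinarith [(Nat.cast_nonneg k : (0:ℝ) ≤ (k:ℝ))]
  -- Step 4 : γ' is a valid NSC constant for exponent p
  have hmem : γ' ∈ validNSC A p k := by
    intro S hS z hzker
    by_cases hz0 : z = 0
    · subst hz0
      simp [phi]
    · have hM : 0 < ‖z‖ := norm_pos_iff.mpr hz0
      have hz'K : (‖z‖⁻¹ • z) ∈ K := by
        refine ⟨?_, ?_⟩
        · rw [Matrix.mulVec_smul, hzker, smul_zero]
        · rw [norm_smul, norm_inv, norm_norm]
          field_simp
      obtain ⟨W, hWcard, hW⟩ := hKU _ hz'K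
      have hWz : ∀ i ∈ W, ε * ‖z‖ ≤ |z i| := by
        intro i hi
        have h1 := hW i hi
        have h2 : |(‖z‖⁻¹ • z) i| = ‖z‖⁻¹ * |z i| := by
          simp [abs_mul, abs_of_pos (inv_pos.mpr hM)]
        rw [h2] at h1
        have hε1 : ε ≤ 1/(↑n₀+1) := min_le_left _ _
        have h3 : ε < ‖z‖⁻¹ * |z i| := lt_of_le_of_lt hε1 h1
        have := mul_le_mul_of_nonneg_right (le_of_lt h3) hM.le
        calc ε * ‖z‖ ≤ (‖z‖⁻¹ * |z i|) * ‖z‖ := this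
          _ = |z i| := by field_simp
      have hWz0 : ∀ i ∈ W, z i ≠ 0 := by
        intro i hi h0
        have h1 := hWz i hi
        rw [h0, abs_zero] at h1
        nlinarith
      have hLHS : ∑ i ∈ S, phi p (z i) ≤ (k:ℝ) * ‖z‖ ^ p := by
        have hterm : ∀ i ∈ S, phi p (z i) ≤ ‖z‖ ^ p := by
          intro i _
          unfold phi
          split
          · exact le_of_lt (Real.rpow_pos_of_pos hM p)
          · refine Real.rpow_le_rpow (abs_nonneg _) ?_ hp0.le
            calc |z i| = ‖z i‖ := (Real.norm_eq_abs _).symm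
              _ ≤ ‖z‖ := norm_le_pi_norm z i
        calc ∑ i ∈ S, phi p (z i) ≤ S.card • (‖z‖ ^ p) :=
              Finset.sum_le_card_nsmul S _ _ hterm
          _ = (S.card : ℝ) * ‖z‖ ^ p := by rw [nsmul_eq_mul]
          _ ≤ (k:ℝ) * ‖z‖ ^ p := by
              refine mul_le_mul_of_nonneg_right ?_ (Real.rpow_nonneg hM.le p)
              exact_mod_cast hS
      have hsdcard : k+1 ≤ (W \ S).card := by
        have := Finset.le_card_sdiff S W
        omega
      have hsub : W \ S ⊆ Sᶜ := fun i hi =>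
        Finset.mem_compl.mpr (Finset.mem_sdiff.mp hi).2
      have hRHS : ((k:ℝ)+1) * (ε * ‖z‖) ^ p ≤ ∑ i ∈ Sᶜ, phi p (z i) := by
        have h1 : ∀ i ∈ W \ S, (ε * ‖z‖) ^ p ≤ phi p (z i) := by
          intro i hi
          have hiW := (Finset.mem_sdiff.mp hi).1
          have hz_ne := hWz0 i hiW
          unfold phi
          rw [if_neg hz_ne]
          exact Real.rpow_le_rpow (by positivity) (hWz i hiW) hp0.le
        calc ((k:ℝ)+1) * (ε*‖z‖)^p ≤ ((W\S).card : ℝ) * (ε*‖z‖)^p := by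
              refine mul_le_mul_of_nonneg_right ?_ (by positivity)
              exact_mod_cast hsdcard
          _ = (W\S).card • ((ε*‖z‖)^p) := (nsmul_eq_mul _ _).symm
          _ ≤ ∑ i ∈ W\S, phi p (z i) := Finset.card_nsmul_le_sum _ _ _ h1
          _ ≤ ∑ i ∈ Sᶜ, phi p (z i) :=
              Finset.sum_le_sum_of_subset_of_nonneg hsub
                (fun i _ _ => phi_nonneg p (z i))
      have hMp : (0:ℝ) < ‖z‖ ^ p := Real.rpow_pos_of_pos hM p
      have hchain : (k:ℝ) * ‖z‖ ^ p ≤ γ' * (((k:ℝ)+1) * (ε*‖z‖)^p) := by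
        rw [Real.mul_rpow hε0.le hM.le, hεp]
        calc (k:ℝ) * ‖z‖^p ≤ (γ' * (((k:ℝ)+1)*c)) * ‖z‖^p :=
              mul_le_mul_of_nonneg_right hkey hMp.le
          _ = γ' * (((k:ℝ)+1) * (c * ‖z‖^p)) := by ring
      calc ∑ i ∈ S, phi p (z i) ≤ (k:ℝ)*‖z‖^p := hLHS
        _ ≤ γ' * (((k:ℝ)+1) * (ε*‖z‖)^p) := hchain
        _ ≤ γ' * ∑ i ∈ Sᶜ, phi p (z i) := mul_le_mul_of_nonneg_left hRHS hγ0
  exact ⟨p, hp0, hp1, gammaNSC_lt_one A p k hmem hγ1⟩
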